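/- Let F be a field of characteristic different from 2 and let a₁, a₂, a₃ ∈ Fˣ. Then the quadratic form a₁x² + a₂y² + a₃z² has a nontrivial zero over F if and only if −a₁a₂ is a square in F, or there exist s, v ∈ F with −a₁a₃ = s² + a₁a₂·v² (i.e. −a₃ is represented by the binary form a₁x² + a₂y², equivalently a₃ lies in a₁ times the norm group of F(√(−a₁a₂))/F). -/

import Mathlib

/-- Over any field `F` of characteristic not `2`, the ternary diagonal form
`a₁x² + a₂y² + a₃z²` with nonzero coefficients is isotropic iff `−a₁a₂` is a square in `F`
or `−a₁a₃ = s² + a₁a₂·v²` for some `s, v ∈ F`. -/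
theorem ternary_isotropic_criterion
    (F : Type*) [Field F] (hF : ringChar F ≠ 2)
    (a₁ a₂ a₃ : F) (h₁ : a₁ ≠ 0) (h₂ : a₂ ≠ 0) (h₃ : a₃ ≠ 0) :
    (∃ x y z : F, ¬(x = 0 ∧ y = 0 ∧ z = 0) ∧
        a₁ * x ^ 2 + a₂ * y ^ 2 + a₃ * z ^ 2 = 0) ↔
      ((∃ s : F, -(a₁ * a₂) = s ^ 2) ∨
        (∃ s v : F, -(a₁ * a₃) = s ^ 2 + a₁ * a₂ * v ^ 2)) := by
  constructor
  · rintro ⟨x, y, z, hnt, heq⟩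
    by_cases hz : z = 0
    · subst hz
      left
      -- a₁x² + a₂y² = 0 with (x,y) ≠ 0, hence y ≠ 0
      have hy : y ≠ 0 := by
        intro hy
        apply hnt
        refine ⟨?_, hy, rfl⟩
        have : a₁ * x ^ 2 = 0 := by
          have := heq
          rw [hy] at this
          ring_nf at this ⊢
          linear_combination this
        have hx2 : x ^ 2 = 0 := by
          rcases mul_eq_zero.mp this with h | h
          · exact absurd h h₁
          · exact h
        exact pow_eq_zero_iff (n := 2) (by norm_num) |>.mp hx2
      refine ⟨a₁ * x / y, ?_⟩
      have heq' : a₁ * x ^ 2 = -(a₂ * y ^ 2) := by linear_combination heq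
      field_simp
      linear_combination -heq'
    · right
      refine ⟨a₁ * x / z, y / z, ?_⟩
      field_simp
      linear_combination -heq
  · rintro (⟨s, hs⟩ | ⟨s, v, hsv⟩)
    · refine ⟨s, a₁, 0, ?_, ?_⟩
      · intro ⟨_, h, _⟩; exact h₁ h
      · linear_combination -a₁ * hs
    · refine ⟨s / a₁, v, 1, ?_, ?_⟩
      · intro ⟨_, _, h⟩; exact one_ne_zero h
      · field_simp
        linear_combination -hsv
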